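/- Let k ≥ 4 and let G be an odd k⁺-critical graph. For every edge v₀v₁ of G with d(v₀) ≡ d(v₁) (mod 2), either max{d(v₀), d(v₁)} > (k−1)/2 or d(v₀) = d(v₁) = (k−1)/2. -/

import Mathlib

open SimpleGraph

/-- The degree of a vertex, as the cardinality of its neighbor set. -/
noncomputable def deg {V : Type} (G : SimpleGraph V) (v : V) : ℕ := (G.neighborSet v).ncard

/-- `H` is a minor of `G`, via branch sets. -/
def IsMinor {W V : Type} (H : SimpleGraph W) (G : SimpleGraph V) : Prop :=
  ∃ B : W → Set V,
    (∀ w, (B w).Nonempty) ∧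
    (∀ w, (G.induce (B w)).Connected) ∧
    (Pairwise fun w₁ w₂ => Disjoint (B w₁) (B w₂)) ∧
    (∀ w₁ w₂, H.Adj w₁ w₂ → ∃ v₁ ∈ B w₁, ∃ v₂ ∈ B w₂, G.Adj v₁ v₂)

/-- A graph is planar iff it has no `K₅` and no `K₃,₃` minor (Wagner's theorem). -/
def IsPlanar {V : Type} (G : SimpleGraph V) : Prop :=
  ¬ IsMinor (completeGraph (Fin 5)) G ∧
  ¬ IsMinor (completeBipartiteGraph (Fin 3) (Fin 3)) G

/-- `G` has thickness at most `t`: its edge set partitions into `t` planar subgraphs. -/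
def ThicknessLE {V : Type} (G : SimpleGraph V) (t : ℕ) : Prop :=
  ∃ c : Sym2 V → Fin t, ∀ i : Fin t,
    IsPlanar (SimpleGraph.fromEdgeSet {e | e ∈ G.edgeSet ∧ c e = i})

/-- The thickness of a graph. -/
noncomputable def thickness {V : Type} (G : SimpleGraph V) : ℕ :=
  sInf {t | ThicknessLE G t}

/-- `φ` is an odd coloring of `G` with `k` colors. -/
def IsOddColoring {V : Type} (G : SimpleGraph V) {k : ℕ} (φ : V → Fin k) : Prop :=
  (∀ ⦃u v⦄, G.Adj u v → φ u ≠ φ v) ∧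
  ∀ v : V, (G.neighborSet v).Nonempty →
    ∃ c : Fin k, Odd ({u | u ∈ G.neighborSet v ∧ φ u = c}.ncard)

/-- The odd chromatic number of `G`. -/
noncomputable def oddChrom {V : Type} (G : SimpleGraph V) : ℕ :=
  sInf {k | ∃ φ : V → Fin k, IsOddColoring G φ}

/-- `G` is odd `k⁺`-critical. -/
def OddCritical {V : Type} (G : SimpleGraph V) (k : ℕ) : Prop :=
  k ≤ oddChrom G ∧ ∀ H : G.Subgraph, H ≠ ⊤ → oddChrom H.coe < k

/-- A vertex is `n`-easy if its degree is odd or it has a neighbor of degree `2i`, `1 ≤ i ≤ n`. -/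
def NEasy {V : Type} (G : SimpleGraph V) (n : ℕ) (v : V) : Prop :=
  Odd (deg G v) ∨ ∃ u ∈ G.neighborSet v, ∃ i, 1 ≤ i ∧ i ≤ n ∧ deg G u = 2 * i



section Machinery
open Finset
open scoped Classical


variable {V : Type} [Fintype V]

noncomputable def clsN {m : ℕ} (G : SimpleGraph V) (χ : V → Fin m) (w : V) (c : Fin m) : ℕ :=
  ((G.neighborFinset w).filter (fun u => χ u = c)).card

lemma ncard_eq_clsN {m} (G : SimpleGraph V) (χ : V → Fin m) (w : V) (c : Fin m) :
    {u | u ∈ G.neighborSet w ∧ χ u = c}.ncard = clsN G χ w c := by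
  rw [clsN, ← Set.ncard_coe_finset]; congr 1; ext u; simp

lemma isOddColoring_iff {m} (G : SimpleGraph V) (φ : V → Fin m) :
    IsOddColoring G φ ↔ ((∀ ⦃u v⦄, G.Adj u v → φ u ≠ φ v) ∧
      ∀ v, (G.neighborSet v).Nonempty → ∃ c, Odd (clsN G φ v c)) := by
  unfold IsOddColoring
  simp_rw [ncard_eq_clsN]

lemma clsN_congr {m} (G : SimpleGraph V) {χ₁ χ₂ : V → Fin m} (w : V)
    (h : ∀ u ∈ G.neighborSet w, χ₁ u = χ₂ u) (c : Fin m) :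
    clsN G χ₁ w c = clsN G χ₂ w c := by
  unfold clsN
  congr 1
  apply Finset.filter_congr
  intro u hu
  rw [h u (by simpa using hu)]

lemma clsN_update_not_mem {m} (G : SimpleGraph V) (χ : V → Fin m) {x w : V}
    (hx : x ∉ G.neighborSet w) (b : Fin m) (c : Fin m) :
    clsN G (Function.update χ x b) w c = clsN G χ w c := by
  apply clsN_congr
  intro u hu
  have : u ≠ x := by rintro rfl; exact hx hu
  exact Function.update_of_ne this _ _

lemma clsN_update_self {m} (G : SimpleGraph V) (χ : V → Fin m) (x : V) (b : Fin m) (c : Fin m) :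
    clsN G (Function.update χ x b) x c = clsN G χ x c :=
  clsN_update_not_mem G χ (fun h => G.irrefl (G.mem_neighborSet x x |>.mp h)) b c

lemma clsN_update_mem {m} (G : SimpleGraph V) (χ : V → Fin m) {x w : V}
    (hx : x ∈ G.neighborSet w) (b : Fin m) (c : Fin m) :
    clsN G (Function.update χ x b) w c + (if χ x = c then 1 else 0)
      = clsN G χ w c + (if b = c then 1 else 0) := by
  have hx' : x ∈ G.neighborFinset w := by simpa using hx
  have hsplit : ∀ (ξ : V → Fin m),
      ((G.neighborFinset w).filter (fun u => ξ u = c)).card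
        = (((G.neighborFinset w).erase x).filter (fun u => ξ u = c)).card
          + (if ξ x = c then 1 else 0) := by
    intro ξ
    conv_lhs => rw [← Finset.insert_erase hx']
    rw [Finset.filter_insert]
    split_ifs with h
    · rw [Finset.card_insert_of_notMem (by simp)]
    · rfl
  have he : (((G.neighborFinset w).erase x).filter (fun u => Function.update χ x b u = c)).card
      = (((G.neighborFinset w).erase x).filter (fun u => χ u = c)).card := by
    congr 1
    apply Finset.filter_congr
    intro u hu
    rw [Function.update_of_ne (Finset.ne_of_mem_erase hu)]
  unfold clsN
  rw [hsplit, hsplit, he, Function.update_self]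
  ring

noncomputable def pairBad {m : ℕ} (G : SimpleGraph V) (χ : V → Fin m) (w : V) (a : Fin m) :
    Finset (Fin m) :=
  Finset.univ.filter (fun b => b ≠ a ∧ Odd (clsN G χ w a) ∧ Odd (clsN G χ w b) ∧
    ∀ c, Odd (clsN G χ w c) → c = a ∨ c = b)

lemma mem_pairBad {m : ℕ} {G : SimpleGraph V} {χ : V → Fin m} {w : V} {a b : Fin m} :
    b ∈ pairBad G χ w a ↔ (b ≠ a ∧ Odd (clsN G χ w a) ∧ Odd (clsN G χ w b) ∧
      ∀ c, Odd (clsN G χ w c) → c = a ∨ c = b) := by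
  unfold pairBad; simp

lemma pairBad_card {m : ℕ} (G : SimpleGraph V) (χ : V → Fin m) (w : V) (a : Fin m) :
    (pairBad G χ w a).card ≤ 1 := by
  rw [Finset.card_le_one]
  intro b hb b' hb'
  rw [mem_pairBad] at hb hb'
  rcases hb'.2.2.2 b hb.2.2.1 with h | h
  · exact absurd h hb.1
  · exact h

lemma pairBad_congr {m : ℕ} (G : SimpleGraph V) {χ₁ χ₂ : V → Fin m} (w : V)
    (h : ∀ u ∈ G.neighborSet w, χ₁ u = χ₂ u) (a : Fin m) :
    pairBad G χ₁ w a = pairBad G χ₂ w a := by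
  unfold pairBad
  apply Finset.filter_congr
  intro b _
  simp_rw [clsN_congr G w h]

/-- parity form of the update lemma -/
lemma clsN_update_mod {m : ℕ} (G : SimpleGraph V) (χ : V → Fin m) {x w : V}
    (hx : x ∈ G.neighborSet w) (b : Fin m) (c : Fin m) :
    (clsN G (Function.update χ x b) w c) % 2
      = (clsN G χ w c + (if b = c then 1 else 0) + (if χ x = c then 1 else 0)) % 2 := by
  have := clsN_update_mem G χ hx b c
  split_ifs at this ⊢ <;> omega

/-- Updating a neighbor's color, generic survival lemma. -/
lemma exists_odd_clsN_update {m : ℕ} (G : SimpleGraph V) (χ : V → Fin m) {x w : V}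
    (hx : x ∈ G.neighborSet w) (hodd : ∃ c, Odd (clsN G χ w c)) {b : Fin m}
    (hb : b ∉ pairBad G χ w (χ x)) :
    ∃ c, Odd (clsN G (Function.update χ x b) w c) := by
  by_cases hba : b = χ x
  · subst hba
    simpa [Function.update_eq_self] using hodd
  by_contra hall
  push_neg at hall
  simp only [Nat.not_odd_iff_even, Nat.even_iff] at hall
  apply hb
  rw [mem_pairBad]
  refine ⟨hba, ?_, ?_, ?_⟩
  · have h1 := clsN_update_mod G χ hx b (χ x)
    rw [if_neg hba, if_pos rfl] at h1
    have h2 := hall (χ x)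
    rw [Nat.odd_iff]
    omega
  · have h1 := clsN_update_mod G χ hx b b
    rw [if_pos rfl, if_neg (fun h : χ x = b => hba h.symm)] at h1
    have h2 := hall b
    rw [Nat.odd_iff]
    omega
  · intro c hc
    by_contra hcc
    push_neg at hcc
    have h1 := clsN_update_mod G χ hx b c
    rw [if_neg (fun h => hcc.2 h.symm), if_neg (fun h => hcc.1 h.symm)] at h1
    have h2 := hall c
    rw [Nat.odd_iff] at hc
    omega

/-- Updating a neighbor's color when all classes are even: color `b` becomes odd. -/
lemma exists_odd_clsN_update' {m : ℕ} (G : SimpleGraph V) (χ : V → Fin m) {x w : V}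
    (hx : x ∈ G.neighborSet w) (heven : ∀ c, ¬ Odd (clsN G χ w c)) {b : Fin m}
    (hb : b ≠ χ x) :
    ∃ c, Odd (clsN G (Function.update χ x b) w c) := by
  refine ⟨b, ?_⟩
  have h1 := clsN_update_mod G χ hx b b
  rw [if_pos rfl, if_neg (fun h : χ x = b => hb h.symm)] at h1
  have h2 := heven b
  rw [Nat.not_odd_iff_even, Nat.even_iff] at h2
  rw [Nat.odd_iff]
  omega

lemma degree_eq_sum_clsN {m : ℕ} (G : SimpleGraph V) (χ : V → Fin m) (w : V) :
    (G.neighborFinset w).card = ∑ c, clsN G χ w c :=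
  Finset.card_eq_sum_card_fiberwise (fun u _ => Finset.mem_univ (χ u))

lemma exists_odd_clsN_of_odd_degree {m : ℕ} (G : SimpleGraph V) (χ : V → Fin m) (w : V)
    (h : Odd (G.neighborFinset w).card) : ∃ c, Odd (clsN G χ w c) := by
  rw [degree_eq_sum_clsN G χ w, Finset.odd_sum_iff_odd_card_odd] at h
  have hne : (Finset.univ.filter fun c => Odd (clsN G χ w c)).Nonempty := by
    apply Finset.card_pos.mp
    rcases h with ⟨t, ht⟩; omega
  obtain ⟨c, hc⟩ := hne
  simp only [Finset.mem_filter] at hc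
  exact ⟨c, hc.2⟩





/-- Monotone: an odd coloring with `m` colors gives one with `n ≥ m` colors. -/
lemma IsOddColoring.castLE {W : Type} {G : SimpleGraph W} {m n : ℕ} (h : m ≤ n)
    {φ : W → Fin m} (hφ : IsOddColoring G φ) :
    IsOddColoring G (fun v => Fin.castLE h (φ v)) := by
  constructor
  · intro u v huv he
    exact hφ.1 huv (Fin.castLE_injective h he)
  · intro v hv
    obtain ⟨c, hc⟩ := hφ.2 v hv
    refine ⟨Fin.castLE h c, ?_⟩
    have : {u | u ∈ G.neighborSet v ∧ Fin.castLE h (φ u) = Fin.castLE h c}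
        = {u | u ∈ G.neighborSet v ∧ φ u = c} := by
      ext u
      simp only [Set.mem_setOf_eq, and_congr_right_iff]
      intro _
      exact ⟨fun he => Fin.castLE_injective h he, fun he => by rw [he]⟩
    rwa [this]

/-- Every finite graph has an odd coloring with `card W` colors (the injective coloring). -/
lemma exists_isOddColoring_card {W : Type} [Fintype W] (G : SimpleGraph W) :
    ∃ φ : W → Fin (Fintype.card W), IsOddColoring G φ := by
  refine ⟨Fintype.equivFin W, ?_, ?_⟩
  · intro u v huv he
    exact G.ne_of_adj huv ((Fintype.equivFin W).injective he)
  · intro v ⟨u₀, hu₀⟩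
    refine ⟨Fintype.equivFin W u₀, ?_⟩
    have : {u | u ∈ G.neighborSet v ∧ Fintype.equivFin W u = Fintype.equivFin W u₀} = {u₀} := by
      ext u
      simp only [Set.mem_setOf_eq, Set.mem_singleton_iff]
      constructor
      · rintro ⟨_, he⟩; exact (Fintype.equivFin W).injective he
      · rintro rfl; exact ⟨hu₀, rfl⟩
    rw [this, Set.ncard_singleton]
    exact odd_one

lemma oddChrom_exists {W : Type} [Fintype W] (G : SimpleGraph W) {n : ℕ}
    (h : oddChrom G ≤ n) : ∃ φ : W → Fin n, IsOddColoring G φ := by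
  have hne : {k | ∃ φ : W → Fin k, IsOddColoring G φ}.Nonempty :=
    ⟨Fintype.card W, exists_isOddColoring_card G⟩
  have hmem := Nat.sInf_mem hne
  obtain ⟨φ, hφ⟩ := hmem
  exact ⟨_, hφ.castLE h⟩

lemma oddChrom_le {W : Type} {G : SimpleGraph W} {n : ℕ} (φ : W → Fin n)
    (hφ : IsOddColoring G φ) : oddChrom G ≤ n :=
  Nat.sInf_le ⟨φ, hφ⟩



variable {V : Type} [Fintype V]

/-- key: an edge-deleted coloring, in `G`-language -/
lemma exists_edge_deleted_coloring (G : SimpleGraph V) {k : ℕ} (hk : 1 ≤ k)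
    (hG : OddCritical G k) {x z : V} (hxz : G.Adj x z) :
    ∃ φ : V → Fin (k-1),
      (∀ a b, G.Adj a b → s(a,b) ≠ s(x,z) → φ a ≠ φ b) ∧
      (∀ w, w ≠ x → w ≠ z → (G.neighborSet w).Nonempty → ∃ c, Odd (clsN G φ w c)) := by
  -- the subgraph with the edge xz removed
  set H : G.Subgraph :=
    { verts := Set.univ
      Adj := fun a b => G.Adj a b ∧ s(a,b) ≠ s(x,z)
      adj_sub := fun h => h.1
      edge_vert := fun _ => Set.mem_univ _
      symm := by
        refine ⟨fun a b h => ?_⟩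
        refine ⟨h.1.symm, ?_⟩
        rw [Sym2.eq_swap]
        exact h.2 } with hH
  have hne : H ≠ ⊤ := by
    intro h
    have : H.Adj x z := by
      rw [h]
      exact hxz
    exact this.2 rfl
  have hlt := hG.2 H hne
  obtain ⟨φ₀, hφ₀⟩ := oddChrom_exists H.coe (Nat.le_sub_one_of_lt hlt)
  refine ⟨fun v => φ₀ ⟨v, Set.mem_univ v⟩, ?_, ?_⟩
  · intro a b hab hs
    exact hφ₀.1 (by exact ⟨hab, hs⟩)
  · intro w hwx hwz hne'
    have hsne : ∀ u, G.Adj w u → H.Adj w u := by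
      intro u hu
      refine ⟨hu, ?_⟩
      intro hs
      rw [Sym2.eq_iff] at hs
      rcases hs with ⟨h1, h2⟩ | ⟨h1, h2⟩
      · exact hwx h1
      · exact hwz h1
    obtain ⟨u₀, hu₀⟩ := hne'
    have hcne : (H.coe.neighborSet ⟨w, Set.mem_univ w⟩).Nonempty :=
      ⟨⟨u₀, Set.mem_univ u₀⟩, hsne u₀ hu₀⟩
    obtain ⟨c, hc⟩ := hφ₀.2 _ hcne
    refine ⟨c, ?_⟩
    rw [← ncard_eq_clsN]
    have hset : {u : V | u ∈ G.neighborSet w ∧ φ₀ ⟨u, Set.mem_univ u⟩ = c}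
        = Subtype.val '' {us | us ∈ H.coe.neighborSet ⟨w, Set.mem_univ w⟩ ∧ φ₀ us = c} := by
      ext u
      constructor
      · rintro ⟨hu, hc'⟩
        exact ⟨⟨u, Set.mem_univ u⟩, ⟨hsne u hu, hc'⟩, rfl⟩
      · rintro ⟨us, ⟨hadj, hcc⟩, rfl⟩
        have : H.Adj w us.val := hadj
        exact ⟨this.1, hcc⟩
    rw [show {u : V | u ∈ G.neighborSet w ∧ (fun v => φ₀ ⟨v, Set.mem_univ v⟩) u = c}
        = {u : V | u ∈ G.neighborSet w ∧ φ₀ ⟨u, Set.mem_univ u⟩ = c} from rfl, hset,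
      Set.ncard_image_of_injective _ Subtype.val_injective]
    exact hc

/-- GEN1: single recoloring at `x`, where `xz` is the deleted edge. -/
lemma gen1 {m : ℕ} (G : SimpleGraph V) {x z : V} (hxz : G.Adj x z) (φ : V → Fin m)
    (hprop : ∀ a b, G.Adj a b → s(a,b) ≠ s(x,z) → φ a ≠ φ b)
    (hoddH : ∀ w, w ≠ x → w ≠ z → (G.neighborSet w).Nonempty → ∃ c, Odd (clsN G φ w c))
    (b : Fin m)
    (h1 : ∀ u ∈ G.neighborSet x, φ u ≠ b)
    (h2 : ∀ u ∈ G.neighborSet x, u ≠ z → b ∉ pairBad G φ u (φ x))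
    (h3 : ∃ c, Odd (clsN G (Function.update φ x b) x c))
    (h4 : ∃ c, Odd (clsN G (Function.update φ x b) z c)) :
    IsOddColoring G (Function.update φ x b) := by
  rw [isOddColoring_iff]
  have hupx : Function.update φ x b x = b := Function.update_self x b φ
  have hupo : ∀ u, u ≠ x → Function.update φ x b u = φ u :=
    fun u hu => Function.update_of_ne hu _ _
  constructor
  · intro a' b' hab
    by_cases ha : a' = x
    · have hbx : b' ≠ x := by rintro rfl; rw [ha] at hab; exact G.irrefl hab
      rw [ha, hupx, hupo b' hbx]
      rw [ha] at hab
      exact fun h => h1 b' hab h.symm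
    · by_cases hbb : b' = x
      · rw [hbb, hupx, hupo a' ha]
        rw [hbb] at hab
        exact h1 a' hab.symm
      · rw [hupo a' ha, hupo b' hbb]
        apply hprop a' b' hab
        intro hs
        rw [Sym2.eq_iff] at hs
        rcases hs with ⟨h1', _⟩ | ⟨_, h2'⟩
        · exact ha h1'
        · exact hbb h2'
  · intro v hv
    by_cases hvx : v = x
    · subst hvx; exact h3
    by_cases hvz : v = z
    · subst hvz; exact h4
    by_cases hmem : x ∈ G.neighborSet v
    · exact exists_odd_clsN_update G φ hmem (hoddH v hvx hvz hv)
        (h2 v ((G.mem_neighborSet x v).mpr ((G.mem_neighborSet v x).mp hmem).symm) hvz)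
    · have : ∀ u ∈ G.neighborSet v, Function.update φ x b u = φ u := by
        intro u hu
        have : u ≠ x := by rintro rfl; exact hmem hu
        exact Function.update_of_ne this _ _
      rw [show (fun c => Odd (clsN G (Function.update φ x b) v c))
          = fun c => Odd (clsN G φ v c) from funext fun c => by rw [clsN_congr G v this]]
      exact hoddH v hvx hvz hv

/-- GEN2: double recoloring, first at `x` then at `z`, where `xz` is the deleted edge. -/
lemma gen2 {m : ℕ} (G : SimpleGraph V) {x z : V} (hxz : G.Adj x z) (φ : V → Fin m)
    (hprop : ∀ a b, G.Adj a b → s(a,b) ≠ s(x,z) → φ a ≠ φ b)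
    (hoddH : ∀ w, w ≠ x → w ≠ z → (G.neighborSet w).Nonempty → ∃ c, Odd (clsN G φ w c))
    (bx bz : Fin m)
    (h1x : ∀ u ∈ G.neighborSet x,
      Function.update (Function.update φ x bx) z bz u ≠ bx)
    (h1z : ∀ u ∈ G.neighborSet z,
      Function.update (Function.update φ x bx) z bz u ≠ bz)
    (h2x : ∀ u ∈ G.neighborSet x, u ≠ z → bx ∉ pairBad G φ u (φ x))
    (h2z : ∀ u ∈ G.neighborSet z, u ≠ x →
      bz ∉ pairBad G (Function.update φ x bx) u ((Function.update φ x bx) z))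
    (h3 : ∃ c, Odd (clsN G (Function.update (Function.update φ x bx) z bz) x c))
    (h4 : ∃ c, Odd (clsN G (Function.update (Function.update φ x bx) z bz) z c)) :
    IsOddColoring G (Function.update (Function.update φ x bx) z bz) := by
  have hxzne : x ≠ z := G.ne_of_adj hxz
  set ψ := Function.update (Function.update φ x bx) z bz with hψ
  have hψx : ψ x = bx := by
    rw [hψ, Function.update_of_ne hxzne, Function.update_self]
  have hψz : ψ z = bz := by rw [hψ, Function.update_self]
  have hψo : ∀ u, u ≠ x → u ≠ z → ψ u = φ u := by
    intro u hux huz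
    rw [hψ, Function.update_of_ne huz, Function.update_of_ne hux]
  rw [isOddColoring_iff]
  constructor
  · intro a' b' hab
    by_cases ha : a' = x
    · subst ha; rw [hψx]; exact fun h => h1x b' hab h.symm
    by_cases ha' : a' = z
    · subst ha'; rw [hψz]; exact fun h => h1z b' hab h.symm
    by_cases hb : b' = x
    · subst hb; rw [hψx]; exact fun h => (h1x a' hab.symm) h
    by_cases hb' : b' = z
    · subst hb'; rw [hψz]; exact fun h => (h1z a' hab.symm) h
    · rw [hψo a' ha ha', hψo b' hb hb']
      apply hprop a' b' hab
      intro hs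
      rw [Sym2.eq_iff] at hs
      rcases hs with ⟨h1', _⟩ | ⟨_, h2'⟩
      · exact ha h1'
      · exact hb h2'
  · intro v hv
    by_cases hvx : v = x
    · subst hvx; exact h3
    by_cases hvz : v = z
    · subst hvz; exact h4
    -- step 1
    have step1 : ∃ c, Odd (clsN G (Function.update φ x bx) v c) := by
      by_cases hmem : x ∈ G.neighborSet v
      · exact exists_odd_clsN_update G φ hmem (hoddH v hvx hvz hv)
          (h2x v ((G.mem_neighborSet x v).mpr ((G.mem_neighborSet v x).mp hmem).symm) hvz)
      · have hagree : ∀ u ∈ G.neighborSet v, Function.update φ x bx u = φ u := by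
          intro u hu
          have : u ≠ x := by rintro rfl; exact hmem hu
          exact Function.update_of_ne this _ _
        obtain ⟨c, hc⟩ := hoddH v hvx hvz hv
        exact ⟨c, by rwa [clsN_congr G v hagree]⟩
    by_cases hmem : z ∈ G.neighborSet v
    · exact exists_odd_clsN_update G _ hmem step1
        (h2z v ((G.mem_neighborSet z v).mpr ((G.mem_neighborSet v z).mp hmem).symm) hvx)
    · have hagree : ∀ u ∈ G.neighborSet v, ψ u = Function.update φ x bx u := by
        intro u hu
        have : u ≠ z := by rintro rfl; exact hmem hu
        exact Function.update_of_ne this _ _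
      obtain ⟨c, hc⟩ := step1
      exact ⟨c, by rwa [clsN_congr G v hagree]⟩


lemma no_coloring {V : Type} [Fintype V] {G : SimpleGraph V} {k : ℕ} (hk : 4 ≤ k)
    (hG : OddCritical G k) (ψ : V → Fin (k-1)) (h : IsOddColoring G ψ) : False := by
  have h1 : oddChrom G ≤ k - 1 := oddChrom_le ψ h
  have h2 := hG.1
  omega

lemma exists_avoid {n : ℕ} (F : Finset (Fin n)) (h : F.card < n) : ∃ b, b ∉ F := by
  by_contra hall
  push_neg at hall
  have : (Finset.univ : Finset (Fin n)) ⊆ F := fun b _ => hall b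
  have := Finset.card_le_card this
  simp at this
  omega

/-- The odd-degree endpoint lemma. -/
lemma odd_endpoint {G : SimpleGraph V} {k : ℕ} (hk : 4 ≤ k) (hG : OddCritical G k)
    {v₀ v₁ : V} (hadj : G.Adj v₀ v₁)
    (h₀ : Odd (G.neighborFinset v₀).card) (h₁ : Odd (G.neighborFinset v₁).card) :
    k - 1 ≤ 2 * (G.neighborFinset v₀).card := by
  by_contra hlt
  push_neg at hlt
  obtain ⟨φ, hprop, hoddH⟩ := exists_edge_deleted_coloring G (by omega) hG hadj
  set d₀ := (G.neighborFinset v₀).card with hd₀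
  have hd₀pos : 0 < d₀ := Finset.card_pos.mpr ⟨v₁, by simpa using hadj⟩
  set F : Finset (Fin (k-1)) :=
    ((G.neighborFinset v₀).image φ) ∪
      ((G.neighborFinset v₀).erase v₁).biUnion (fun u => pairBad G φ u (φ v₀)) with hF
  have hcard : F.card < k - 1 := by
    rw [hF]
    have hc1 : ((G.neighborFinset v₀).image φ).card ≤ d₀ := Finset.card_image_le
    have hc2 : (((G.neighborFinset v₀).erase v₁).biUnion
        (fun u => pairBad G φ u (φ v₀))).card ≤ d₀ - 1 := by
      calc _ ≤ ∑ u ∈ (G.neighborFinset v₀).erase v₁, (pairBad G φ u (φ v₀)).card :=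
            Finset.card_biUnion_le
        _ ≤ ∑ _u ∈ (G.neighborFinset v₀).erase v₁, 1 :=
            Finset.sum_le_sum (fun u _ => pairBad_card G φ u (φ v₀))
        _ = ((G.neighborFinset v₀).erase v₁).card := by simp
        _ ≤ d₀ - 1 := by
            rw [Finset.card_erase_of_mem (by simpa using hadj)]
    have := Finset.card_union_le ((G.neighborFinset v₀).image φ)
      (((G.neighborFinset v₀).erase v₁).biUnion (fun u => pairBad G φ u (φ v₀)))
    omega
  obtain ⟨b, hb⟩ := exists_avoid F hcard
  have hbim : b ∉ (G.neighborFinset v₀).image φ := fun h => hb (Finset.mem_union_left _ h)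
  have hbpb : ∀ u ∈ G.neighborSet v₀, u ≠ v₁ → b ∉ pairBad G φ u (φ v₀) := by
    intro u hu hune hmem
    exact hb (Finset.mem_union_right _ (Finset.mem_biUnion.mpr
      ⟨u, Finset.mem_erase.mpr ⟨hune, by simpa using hu⟩, hmem⟩))
  apply no_coloring hk hG (Function.update φ v₀ b)
  apply gen1 G hadj φ hprop hoddH b
  · intro u hu he
    exact hbim (Finset.mem_image.mpr ⟨u, by simpa using hu, he⟩)
  · exact hbpb
  · exact exists_odd_clsN_of_odd_degree G _ v₀ h₀
  · exact exists_odd_clsN_of_odd_degree G _ v₁ h₁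

lemma card_biUnion_pairBad {m : ℕ} (G : SimpleGraph V) (φ : V → Fin m) (s : Finset V)
    (a : Fin m) : (s.biUnion fun u => pairBad G φ u a).card ≤ s.card := by
  calc (s.biUnion fun u => pairBad G φ u a).card
      ≤ ∑ u ∈ s, (pairBad G φ u a).card := Finset.card_biUnion_le
    _ ≤ ∑ _u ∈ s, 1 := Finset.sum_le_sum (fun u _ => pairBad_card G φ u a)
    _ = s.card := by simp

/-- The even-degree edge lemma. -/
lemma even_endpoint {G : SimpleGraph V} {k : ℕ} (hk : 4 ≤ k) (hG : OddCritical G k)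
    {v₀ v₁ : V} (hadj : G.Adj v₀ v₁)
    (h₀ : Even (G.neighborFinset v₀).card) (h₁ : Even (G.neighborFinset v₁).card) :
    ¬ (2 * (G.neighborFinset v₀).card ≤ k - 2 ∧ 2 * (G.neighborFinset v₁).card ≤ k - 1) := by
  rintro ⟨hb₀, hb₁⟩
  obtain ⟨φ, hprop, hoddH⟩ := exists_edge_deleted_coloring G (by omega) hG hadj
  set d₀ := (G.neighborFinset v₀).card with hd₀
  set d₁ := (G.neighborFinset v₁).card with hd₁
  have hne : v₀ ≠ v₁ := G.ne_of_adj hadj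
  have hv₁₀f : v₁ ∈ G.neighborFinset v₀ := by simpa using hadj
  have hv₀₁f : v₀ ∈ G.neighborFinset v₁ := by simpa using hadj.symm
  have hv₁₀s : v₁ ∈ G.neighborSet v₀ := hadj
  have hv₀₁s : v₀ ∈ G.neighborSet v₁ := hadj.symm
  have hd₀pos : 0 < d₀ := Finset.card_pos.mpr ⟨v₁, hv₁₀f⟩
  have hd₁pos : 0 < d₁ := Finset.card_pos.mpr ⟨v₀, hv₀₁f⟩
  have hprop' : ∀ a b, G.Adj a b → s(a,b) ≠ s(v₁,v₀) → φ a ≠ φ b := by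
    intro a b hab hs
    exact hprop a b hab (fun h => hs (h.trans (Sym2.eq_swap)))
  have hoddH' : ∀ w, w ≠ v₁ → w ≠ v₀ → (G.neighborSet w).Nonempty →
      ∃ c, Odd (clsN G φ w c) := fun w h1 h2 => hoddH w h2 h1
  set a₀ := φ v₀ with ha₀
  set a₁ := φ v₁ with ha₁
  by_cases hO₀ : ∃ c, Odd (clsN G φ v₀ c)
  · -- cases (i) and (ii): recolor v₀
    by_cases hO₁ : ∃ c, Odd (clsN G φ v₁ c)
    · -- case (i)
      set F : Finset (Fin (k-1)) := ((G.neighborFinset v₀).image φ) ∪ pairBad G φ v₁ a₀ ∪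
        ((G.neighborFinset v₀).erase v₁).biUnion (fun u => pairBad G φ u a₀) with hF
      have hcard : F.card < k - 1 := by
        rw [hF]
        have hc1 : ((G.neighborFinset v₀).image φ).card ≤ d₀ := Finset.card_image_le
        have hc2 := pairBad_card G φ v₁ a₀
        have hc3 := card_biUnion_pairBad G φ ((G.neighborFinset v₀).erase v₁) a₀
        rw [Finset.card_erase_of_mem hv₁₀f] at hc3
        have hu1 := Finset.card_union_le (((G.neighborFinset v₀).image φ) ∪ pairBad G φ v₁ a₀)
          (((G.neighborFinset v₀).erase v₁).biUnion (fun u => pairBad G φ u a₀))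
        have hu2 := Finset.card_union_le ((G.neighborFinset v₀).image φ) (pairBad G φ v₁ a₀)
        omega
      obtain ⟨b, hb⟩ := exists_avoid F hcard
      rw [hF] at hb
      apply no_coloring hk hG (Function.update φ v₀ b)
      apply gen1 G hadj φ hprop hoddH b
      · intro u hu he
        exact hb (Finset.mem_union_left _ (Finset.mem_union_left _
          (Finset.mem_image.mpr ⟨u, by simpa using hu, he⟩)))
      · intro u hu hune hmem
        exact hb (Finset.mem_union_right _ (Finset.mem_biUnion.mpr
          ⟨u, Finset.mem_erase.mpr ⟨hune, by simpa using hu⟩, hmem⟩))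
      · obtain ⟨c, hc⟩ := hO₀
        exact ⟨c, by rwa [clsN_update_self]⟩
      · exact exists_odd_clsN_update G φ hv₀₁s hO₁
          (fun hmem => hb (Finset.mem_union_left _ (Finset.mem_union_right _ hmem)))
    · -- case (ii)
      push_neg at hO₁
      set F : Finset (Fin (k-1)) := insert a₀ ((G.neighborFinset v₀).image φ) ∪
        ((G.neighborFinset v₀).erase v₁).biUnion (fun u => pairBad G φ u a₀) with hF
      have hcard : F.card < k - 1 := by
        rw [hF]
        have hc1 : ((G.neighborFinset v₀).image φ).card ≤ d₀ := Finset.card_image_le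
        have hc1' := Finset.card_insert_le a₀ ((G.neighborFinset v₀).image φ)
        have hc3 := card_biUnion_pairBad G φ ((G.neighborFinset v₀).erase v₁) a₀
        rw [Finset.card_erase_of_mem hv₁₀f] at hc3
        have hu1 := Finset.card_union_le (insert a₀ ((G.neighborFinset v₀).image φ))
          (((G.neighborFinset v₀).erase v₁).biUnion (fun u => pairBad G φ u a₀))
        omega
      obtain ⟨b, hb⟩ := exists_avoid F hcard
      rw [hF] at hb
      have hba₀ : b ≠ a₀ :=
        fun h => hb (Finset.mem_union_left _ (Finset.mem_insert.mpr (Or.inl h)))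
      apply no_coloring hk hG (Function.update φ v₀ b)
      apply gen1 G hadj φ hprop hoddH b
      · intro u hu he
        exact hb (Finset.mem_union_left _ (Finset.mem_insert.mpr (Or.inr
          (Finset.mem_image.mpr ⟨u, by simpa using hu, he⟩))))
      · intro u hu hune hmem
        exact hb (Finset.mem_union_right _ (Finset.mem_biUnion.mpr
          ⟨u, Finset.mem_erase.mpr ⟨hune, by simpa using hu⟩, hmem⟩))
      · obtain ⟨c, hc⟩ := hO₀
        exact ⟨c, by rwa [clsN_update_self]⟩
      · exact exists_odd_clsN_update' G φ hv₀₁s hO₁ hba₀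
  · -- cases (iii) and (iv)
    push_neg at hO₀
    -- in both cases, a₀ ≠ a₁
    have hne01 : a₀ ≠ a₁ := by
      intro heq
      have hcls := hO₀ a₁
      have hmem1 : v₁ ∈ (G.neighborFinset v₀).filter (fun u => φ u = a₁) :=
        Finset.mem_filter.mpr ⟨hv₁₀f, rfl⟩
      have hge1 : 1 ≤ clsN G φ v₀ a₁ := Finset.card_pos.mpr ⟨v₁, hmem1⟩
      have hgt1 : 1 < clsN G φ v₀ a₁ := by
        rw [Nat.not_odd_iff_even, Nat.even_iff] at hcls
        omega
      obtain ⟨u, hu, hune⟩ := Finset.exists_mem_ne hgt1 v₁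
      rw [Finset.mem_filter] at hu
      have hadj' : G.Adj v₀ u := by simpa using hu.1
      apply hprop v₀ u hadj' ?_ (heq.trans hu.2.symm)
      intro hs
      rw [Sym2.eq_iff] at hs
      rcases hs with ⟨_, h2⟩ | ⟨h1, _⟩
      · exact hune h2
      · exact hne h1
    set P : Finset (Fin (k-1)) := ((G.neighborFinset v₁).erase v₀).image φ with hP
    by_cases hO₁ : ∃ c, Odd (clsN G φ v₁ c)
    · -- case (iii)
      set C : Finset (Fin (k-1)) :=
        ((G.neighborFinset v₁).erase v₀).biUnion (fun u => pairBad G φ u a₁) with hC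
      have hPcard : P.card ≤ d₁ - 1 := by
        have := Finset.card_image_le (s := (G.neighborFinset v₁).erase v₀) (f := φ)
        rwa [Finset.card_erase_of_mem hv₀₁f] at this
      have hCcard : C.card ≤ d₁ - 1 := by
        have := card_biUnion_pairBad G φ ((G.neighborFinset v₁).erase v₀) a₁
        rwa [Finset.card_erase_of_mem hv₀₁f] at this
      by_cases hA : a₀ ∈ P ∪ C
      · -- case (iii-b) : recolor v₁ alone
        set F : Finset (Fin (k-1)) := insert a₁ (P ∪ C) with hF
        have hcard : F.card < k - 1 := by
          rw [hF]
          have hc1 := Finset.card_insert_le a₁ (P ∪ C)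
          have hc2 := Finset.card_union_le P C
          omega
        obtain ⟨b, hb⟩ := exists_avoid F hcard
        rw [hF] at hb
        have hbP : b ∉ P := fun h =>
          hb (Finset.mem_insert.mpr (Or.inr (Finset.mem_union_left _ h)))
        have hbC : b ∉ C := fun h =>
          hb (Finset.mem_insert.mpr (Or.inr (Finset.mem_union_right _ h)))
        have hba₁ : b ≠ a₁ := fun h => hb (Finset.mem_insert.mpr (Or.inl h))
        have hba₀ : b ≠ a₀ := fun h => by
          rw [h] at hbP hbC
          rcases Finset.mem_union.mp hA with h' | h'
          exacts [hbP h', hbC h']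
        apply no_coloring hk hG (Function.update φ v₁ b)
        apply gen1 G hadj.symm φ hprop' hoddH' b
        · intro u hu he
          by_cases huv : u = v₀
          · rw [huv] at he; exact hba₀ he.symm
          · exact hbP (Finset.mem_image.mpr ⟨u,
              Finset.mem_erase.mpr ⟨huv, by simpa using hu⟩, he⟩)
        · intro u hu hune hmem
          exact hbC (Finset.mem_biUnion.mpr
            ⟨u, Finset.mem_erase.mpr ⟨hune, by simpa using hu⟩, hmem⟩)
        · obtain ⟨c, hc⟩ := hO₁
          exact ⟨c, by rwa [clsN_update_self]⟩
        · exact exists_odd_clsN_update' G φ hv₁₀s hO₀ hba₁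
      · -- case (iii-a) : recolor v₁ to a₀ and v₀ to a fresh color
        have hAP : a₀ ∉ P := fun h => hA (Finset.mem_union_left _ h)
        have hAC : a₀ ∉ C := fun h => hA (Finset.mem_union_right _ h)
        set χ : V → Fin (k-1) := Function.update φ v₁ a₀ with hχ
        have hχv₀ : χ v₀ = a₀ := by rw [hχ, Function.update_of_ne hne]
        have hχv₁ : χ v₁ = a₀ := by rw [hχ, Function.update_self]
        have hχu : ∀ u, u ≠ v₁ → χ u = φ u := fun u hu => by
          rw [hχ, Function.update_of_ne hu]
        set F₀ : Finset (Fin (k-1)) := ((G.neighborFinset v₀).image χ) ∪ pairBad G χ v₁ a₀ ∪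
          ((G.neighborFinset v₀).erase v₁).biUnion (fun u => pairBad G χ u a₀) with hF₀
        have hcard : F₀.card < k - 1 := by
          rw [hF₀]
          have hc1 : ((G.neighborFinset v₀).image χ).card ≤ d₀ := Finset.card_image_le
          have hc2 := pairBad_card G χ v₁ a₀
          have hc3 := card_biUnion_pairBad G χ ((G.neighborFinset v₀).erase v₁) a₀
          rw [Finset.card_erase_of_mem hv₁₀f] at hc3
          have hu1 := Finset.card_union_le (((G.neighborFinset v₀).image χ) ∪ pairBad G χ v₁ a₀)
            (((G.neighborFinset v₀).erase v₁).biUnion (fun u => pairBad G χ u a₀))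
          have hu2 := Finset.card_union_le ((G.neighborFinset v₀).image χ) (pairBad G χ v₁ a₀)
          omega
        obtain ⟨b₀, hb₀'⟩ := exists_avoid F₀ hcard
        rw [hF₀] at hb₀'
        have hbim : b₀ ∉ (G.neighborFinset v₀).image χ := fun h =>
          hb₀' (Finset.mem_union_left _ (Finset.mem_union_left _ h))
        have hb₀a₀ : b₀ ≠ a₀ := fun h =>
          hbim (Finset.mem_image.mpr ⟨v₁, hv₁₀f, hχv₁.trans h.symm⟩)
        apply no_coloring hk hG (Function.update (Function.update φ v₁ a₀) v₀ b₀)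
        apply gen2 G hadj.symm φ hprop' hoddH' a₀ b₀
        · -- h1x
          intro u hu he
          by_cases huv : u = v₀
          · rw [huv, Function.update_self] at he
            exact hb₀a₀ he
          · have huv₁ : u ≠ v₁ := by rintro rfl; exact G.irrefl hu
            rw [Function.update_of_ne huv, Function.update_of_ne huv₁] at he
            exact hAP (Finset.mem_image.mpr ⟨u,
              Finset.mem_erase.mpr ⟨huv, by simpa using hu⟩, he⟩)
        · -- h1z
          intro u hu he
          have huv : u ≠ v₀ := by rintro rfl; exact G.irrefl hu
          rw [Function.update_of_ne huv] at he
          exact hbim (Finset.mem_image.mpr ⟨u, by simpa using hu, he⟩)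
        · -- h2x
          intro u hu hune hmem
          exact hAC (Finset.mem_biUnion.mpr
            ⟨u, Finset.mem_erase.mpr ⟨hune, by simpa using hu⟩, hmem⟩)
        · -- h2z
          intro u hu hune hmem
          rw [show Function.update φ v₁ a₀ v₀ = a₀ from hχv₀] at hmem
          exact hb₀' (Finset.mem_union_right _ (Finset.mem_biUnion.mpr
            ⟨u, Finset.mem_erase.mpr ⟨hune, by simpa using hu⟩, hmem⟩))
        · -- h3 : v₁'s own condition
          have hχodd : ∃ c, Odd (clsN G χ v₁ c) := by
            obtain ⟨c, hc⟩ := hO₁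
            refine ⟨c, ?_⟩
            rwa [clsN_congr G v₁ (fun u hu => hχu u
              (by rintro rfl; exact G.irrefl hu))]
          have := exists_odd_clsN_update G χ hv₀₁s hχodd (b := b₀) ?_
          · exact this
          · rw [hχv₀]
            exact fun hmem => hb₀' (Finset.mem_union_left _ (Finset.mem_union_right _ hmem))
        · -- h4 : v₀'s own condition
          have h4' : ∃ c, Odd (clsN G χ v₀ c) :=
            exists_odd_clsN_update' G φ hv₁₀s hO₀ hne01
          obtain ⟨c, hc⟩ := h4'
          exact ⟨c, by rwa [clsN_update_self]⟩
    · -- case (iv)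
      push_neg at hO₁
      -- mining: 2 * P.card ≤ d₁
      have h2P : 2 * P.card ≤ d₁ := by
        set E := (G.neighborFinset v₁).erase v₀ with hE
        have hsum : E.card = ∑ c ∈ P, (E.filter (fun u => φ u = c)).card :=
          Finset.card_eq_sum_card_fiberwise (fun u hu => Finset.mem_image_of_mem φ hu)
        have claim : ∀ c ∈ P, 2 ≤ (E.filter (fun u => φ u = c)).card
            + (if c = a₀ then 1 else 0) := by
          intro c hc
          obtain ⟨u, hu, he⟩ := Finset.mem_image.mp hc
          have humem : u ∈ E.filter (fun u => φ u = c) := Finset.mem_filter.mpr ⟨hu, he⟩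
          have hpos : 1 ≤ (E.filter (fun u => φ u = c)).card := Finset.card_pos.mpr ⟨u, humem⟩
          by_cases hca : c = a₀
          · rw [if_pos hca]; omega
          · rw [if_neg hca]
            have hfeq : E.filter (fun u => φ u = c)
                = (G.neighborFinset v₁).filter (fun u => φ u = c) := by
              rw [hE, Finset.filter_erase, Finset.erase_eq_of_notMem]
              intro hmem
              exact hca (Finset.mem_filter.mp hmem).2.symm
            have heven := hO₁ c
            rw [Nat.not_odd_iff_even, Nat.even_iff] at heven
            rw [hfeq]
            have hpos' : 1 ≤ ((G.neighborFinset v₁).filter (fun u => φ u = c)).card := by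
              rw [← hfeq]; exact hpos
            have hposc : 1 ≤ clsN G φ v₁ c := hpos'
            change 2 ≤ clsN G φ v₁ c
            omega
        have hle : ∑ _c ∈ P, 2 ≤ ∑ c ∈ P, ((E.filter (fun u => φ u = c)).card
            + (if c = a₀ then 1 else 0)) := Finset.sum_le_sum claim
        rw [Finset.sum_add_distrib, ← hsum, Finset.sum_ite_eq' P a₀ (fun _ => 1)] at hle
        have hconst : ∑ _c ∈ P, 2 = 2 * P.card := by
          rw [Finset.sum_const, smul_eq_mul]; ring
        rw [hconst, hE, Finset.card_erase_of_mem hv₀₁f] at hle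
        split_ifs at hle <;> omega
      -- first recoloring at v₀
      set F₀ : Finset (Fin (k-1)) := insert a₀ ((G.neighborFinset v₀).image φ) ∪
        ((G.neighborFinset v₀).erase v₁).biUnion (fun u => pairBad G φ u a₀) with hF₀
      have hcard₀ : F₀.card < k - 1 := by
        rw [hF₀]
        have hc1 : ((G.neighborFinset v₀).image φ).card ≤ d₀ := Finset.card_image_le
        have hc1' := Finset.card_insert_le a₀ ((G.neighborFinset v₀).image φ)
        have hc3 := card_biUnion_pairBad G φ ((G.neighborFinset v₀).erase v₁) a₀
        rw [Finset.card_erase_of_mem hv₁₀f] at hc3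
        have hu1 := Finset.card_union_le (insert a₀ ((G.neighborFinset v₀).image φ))
          (((G.neighborFinset v₀).erase v₁).biUnion (fun u => pairBad G φ u a₀))
        omega
      obtain ⟨b₀, hb₀'⟩ := exists_avoid F₀ hcard₀
      rw [hF₀] at hb₀'
      have hb₀im : b₀ ∉ (G.neighborFinset v₀).image φ := fun h =>
        hb₀' (Finset.mem_union_left _ (Finset.mem_insert.mpr (Or.inr h)))
      have hb₀a₀ : b₀ ≠ a₀ := fun h =>
        hb₀' (Finset.mem_union_left _ (Finset.mem_insert.mpr (Or.inl h)))
      set χ : V → Fin (k-1) := Function.update φ v₀ b₀ with hχ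
      have hχv₀ : χ v₀ = b₀ := by rw [hχ, Function.update_self]
      have hχv₁ : χ v₁ = a₁ := by rw [hχ, Function.update_of_ne hne.symm]
      have hχu : ∀ u, u ≠ v₀ → χ u = φ u := fun u hu => by
        rw [hχ, Function.update_of_ne hu]
      -- second recoloring at v₁
      have himsub : (G.neighborFinset v₁).image χ ⊆ insert b₀ P := by
        intro c hc
        obtain ⟨u, hu, he⟩ := Finset.mem_image.mp hc
        by_cases huv : u = v₀
        · rw [huv, hχv₀] at he
          exact Finset.mem_insert.mpr (Or.inl he.symm)
        · rw [hχu u huv] at he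
          exact Finset.mem_insert.mpr (Or.inr (Finset.mem_image.mpr
            ⟨u, Finset.mem_erase.mpr ⟨huv, hu⟩, he⟩))
      set F₁ : Finset (Fin (k-1)) := ((G.neighborFinset v₁).image χ) ∪ insert a₁
        (((G.neighborFinset v₁).erase v₀).biUnion (fun u => pairBad G χ u a₁)) with hF₁
      have hcard₁ : F₁.card < k - 1 := by
        rw [hF₁]
        have hc1 : ((G.neighborFinset v₁).image χ).card ≤ P.card + 1 := by
          have := Finset.card_le_card himsub
          have := Finset.card_insert_le b₀ P
          omega
        have hc3 := card_biUnion_pairBad G χ ((G.neighborFinset v₁).erase v₀) a₁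
        rw [Finset.card_erase_of_mem hv₀₁f] at hc3
        have hc3' := Finset.card_insert_le a₁
          (((G.neighborFinset v₁).erase v₀).biUnion (fun u => pairBad G χ u a₁))
        have hu1 := Finset.card_union_le ((G.neighborFinset v₁).image χ) (insert a₁
          (((G.neighborFinset v₁).erase v₀).biUnion (fun u => pairBad G χ u a₁)))
        have he₀ : d₀ % 2 = 0 := Nat.even_iff.mp h₀
        have he₁ : d₁ % 2 = 0 := Nat.even_iff.mp h₁
        omega
      obtain ⟨b₁, hb₁'⟩ := exists_avoid F₁ hcard₁
      rw [hF₁] at hb₁'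
      have hb₁im : b₁ ∉ (G.neighborFinset v₁).image χ := fun h =>
        hb₁' (Finset.mem_union_left _ h)
      have hb₁a₁ : b₁ ≠ a₁ := fun h =>
        hb₁' (Finset.mem_union_right _ (Finset.mem_insert.mpr (Or.inl h)))
      have hb₁b₀ : b₁ ≠ b₀ := fun h =>
        hb₁im (h ▸ Finset.mem_image.mpr ⟨v₀, hv₀₁f, hχv₀⟩)
      apply no_coloring hk hG (Function.update (Function.update φ v₀ b₀) v₁ b₁)
      apply gen2 G hadj φ hprop hoddH b₀ b₁
      · -- h1x
        intro u hu he
        by_cases huv : u = v₁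
        · rw [huv, Function.update_self] at he
          exact hb₁b₀ he
        · have huv₀ : u ≠ v₀ := by rintro rfl; exact G.irrefl hu
          rw [Function.update_of_ne huv, Function.update_of_ne huv₀] at he
          exact hb₀im (Finset.mem_image.mpr ⟨u, by simpa using hu, he⟩)
      · -- h1z
        intro u hu he
        have huv : u ≠ v₁ := by rintro rfl; exact G.irrefl hu
        rw [Function.update_of_ne huv] at he
        exact hb₁im (Finset.mem_image.mpr ⟨u, by simpa using hu, he⟩)
      · -- h2x
        intro u hu hune hmem
        exact hb₀' (Finset.mem_union_right _ (Finset.mem_biUnion.mpr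
          ⟨u, Finset.mem_erase.mpr ⟨hune, by simpa using hu⟩, hmem⟩))
      · -- h2z
        intro u hu hune hmem
        rw [show Function.update φ v₀ b₀ v₁ = a₁ from hχv₁] at hmem
        exact hb₁' (Finset.mem_union_right _ (Finset.mem_insert.mpr (Or.inr
          (Finset.mem_biUnion.mpr
            ⟨u, Finset.mem_erase.mpr ⟨hune, by simpa using hu⟩, hmem⟩))))
      · -- h3 : v₀'s own condition
        have heven : ∀ c, ¬ Odd (clsN G χ v₀ c) := by
          intro c
          rw [hχ, clsN_update_self]
          exact hO₀ c
        have := exists_odd_clsN_update' G χ hv₁₀s heven (b := b₁) (by rw [hχv₁]; exact hb₁a₁)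
        exact this
      · -- h4 : v₁'s own condition
        have h4' : ∃ c, Odd (clsN G χ v₁ c) :=
          exists_odd_clsN_update' G φ hv₀₁s hO₁ hb₀a₀
        obtain ⟨c, hc⟩ := h4'
        exact ⟨c, by rwa [clsN_update_self]⟩

end Machinery

/-- In an odd `k⁺`-critical graph (`k ≥ 4`), for every edge `v₀v₁` with `d(v₀) ≡ d(v₁) (mod 2)`,
either `max{d(v₀),d(v₁)} > (k−1)/2` or `d(v₀) = d(v₁) = (k−1)/2`. -/
theorem oddCritical_edge_degree_condition {V : Type} [Fintype V] (G : SimpleGraph V)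
    (k : ℕ) (hk : 4 ≤ k) (hG : OddCritical G k) :
    ∀ v₀ v₁ : V, G.Adj v₀ v₁ → deg G v₀ % 2 = deg G v₁ % 2 →
      ((k : ℚ) - 1) / 2 < (max (deg G v₀) (deg G v₁) : ℚ) ∨
      ((deg G v₀ : ℚ) = ((k : ℚ) - 1) / 2 ∧ (deg G v₁ : ℚ) = ((k : ℚ) - 1) / 2) := by
  classical
  have hdeg : ∀ v, deg G v = (G.neighborFinset v).card := by
    intro v
    rw [deg, ← Set.ncard_coe_finset, neighborFinset_def, Set.coe_toFinset]
  intro v₀ v₁ hadj hpar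
  rw [hdeg v₀, hdeg v₁] at hpar ⊢
  set n₀ := (G.neighborFinset v₀).card with hn₀
  set n₁ := (G.neighborFinset v₁).card with hn₁
  have hM0 : n₀ ≤ max n₀ n₁ := le_max_left _ _
  have hM1 : n₁ ≤ max n₀ n₁ := le_max_right _ _
  -- the two main inequalities
  have key : (k - 1 ≤ 2 * n₀ ∧ k - 1 ≤ 2 * n₁) ∨ (k ≤ 2 * n₀ ∨ k ≤ 2 * n₁) := by
    rcases Nat.mod_two_eq_zero_or_one n₀ with hp | hp
    · -- both even
      have hp' : n₁ % 2 = 0 := by omega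
      have h₀ : Even n₀ := Nat.even_iff.mpr hp
      have h₁ : Even n₁ := Nat.even_iff.mpr hp'
      have he := even_endpoint hk hG hadj h₀ h₁
      have he' := even_endpoint hk hG hadj.symm h₁ h₀
      rw [not_and_or] at he he'
      by_cases hc : 2 * n₀ ≤ k - 1 ∧ 2 * n₁ ≤ k - 1
      · left
        rcases he with h | h
        · omega
        · omega
      · right; omega
    · -- both odd
      have hp' : n₁ % 2 = 1 := by omega
      have h₀ : Odd n₀ := Nat.odd_iff.mpr hp
      have h₁ : Odd n₁ := Nat.odd_iff.mpr hp'
      left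
      exact ⟨odd_endpoint hk hG hadj h₀ h₁, odd_endpoint hk hG hadj.symm h₁ h₀⟩
  by_cases hbig : k ≤ 2 * n₀ ∨ k ≤ 2 * n₁
  · left
    rw [div_lt_iff₀ (by norm_num : (0:ℚ) < 2)]
    rcases hbig with h | h
    · have hq : (k : ℚ) ≤ 2 * (n₀ : ℚ) := by exact_mod_cast h
      have hle : (n₀ : ℚ) ≤ max (n₀ : ℚ) (n₁ : ℚ) := le_max_left _ _
      linarith
    · have hq : (k : ℚ) ≤ 2 * (n₁ : ℚ) := by exact_mod_cast h
      have hle : (n₁ : ℚ) ≤ max (n₀ : ℚ) (n₁ : ℚ) := le_max_right _ _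
      linarith
  · have hkey : k - 1 ≤ 2 * n₀ ∧ k - 1 ≤ 2 * n₁ := by
      rcases key with h | h
      · exact h
      · exact absurd h hbig
    push_neg at hbig
    have he₀ : 2 * n₀ = k - 1 := by omega
    have he₁ : 2 * n₁ = k - 1 := by omega
    right
    have hk1 : (1:ℕ) ≤ k := by omega
    have hc₀ : (2:ℚ) * (n₀ : ℚ) = (k : ℚ) - 1 := by
      have : ((2 * n₀ : ℕ) : ℚ) = ((k - 1 : ℕ) : ℚ) := by rw [he₀]
      push_cast [Nat.cast_sub hk1] at this
      linarith
    have hc₁ : (2:ℚ) * (n₁ : ℚ) = (k : ℚ) - 1 := by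
      have : ((2 * n₁ : ℕ) : ℚ) = ((k - 1 : ℕ) : ℚ) := by rw [he₁]
      push_cast [Nat.cast_sub hk1] at this
      linarith
    constructor <;> [linarith; linarith]
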